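/- Let p be a prime with p ≡ 1 (mod 4) and let n(p) denote its least positive quadratic non-residue. Then for T = 2p² there exists a symmetric two-dimensional arithmetic progression A ⊆ [-T, T] containing no non-zero perfect square, which is proper and satisfies |A| ≥ c·p·n(p) ≥ c'·T^(1/2)·n(p) for absolute positive constants c, c'. -/

import Mathlib

/-- `nres p` is the least positive quadratic non-residue modulo `p`. -/
noncomputable def nres (p : ℕ) : ℕ :=
  sInf {m : ℕ | 0 < m ∧ ¬ IsSquare ((m : ZMod p))}

lemma sq_cancel {F : Type*} [Field F] {a b : F} (ha : IsSquare a) (ha0 : a ≠ 0)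
    (hab : IsSquare (a * b)) : IsSquare b := by
  obtain ⟨c, hc⟩ := ha
  obtain ⟨d, hd⟩ := hab
  have hc0 : c ≠ 0 := by rintro rfl; simp at hc; exact ha0 hc
  refine ⟨d * c⁻¹, ?_⟩
  field_simp
  linear_combination hd - b * hc

namespace NresAux
variable (p : ℕ) [Fact p.Prime]

lemma mem_nres (h2 : p ≠ 2) : 0 < nres p ∧ ¬ IsSquare ((nres p : ZMod p)) := by
  have : ∃ a : ZMod p, ¬ IsSquare a := by
    apply FiniteField.exists_nonsquare
    rw [ZMod.ringChar_zmod_n]; exact h2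
  obtain ⟨a, ha⟩ := this
  have hne : {m : ℕ | 0 < m ∧ ¬ IsSquare ((m : ZMod p))}.Nonempty := by
    refine ⟨a.val, ?_, ?_⟩
    · rcases Nat.eq_zero_or_pos a.val with h | h
      · exfalso; apply ha
        have : a = 0 := by
          have := ZMod.natCast_rightInverse (n := p) a
          rw [h] at this; simpa using this.symm
        simp [this]
      · exact h
    · rwa [ZMod.natCast_rightInverse (n := p) a]
  exact Nat.sInf_mem hne

lemma nres_lt (h2 : p ≠ 2) : nres p < p := by
  have : ∃ a : ZMod p, ¬ IsSquare a := by
    apply FiniteField.exists_nonsquare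
    rw [ZMod.ringChar_zmod_n]; exact h2
  obtain ⟨a, ha⟩ := this
  have hm : a.val ∈ {m : ℕ | 0 < m ∧ ¬ IsSquare ((m : ZMod p))} := by
    constructor
    · rcases Nat.eq_zero_or_pos a.val with h | h
      · exfalso; apply ha
        have : a = 0 := by
          have := ZMod.natCast_rightInverse (n := p) a
          rw [h] at this; simpa using this.symm
        simp [this]
      · exact h
    · rwa [ZMod.natCast_rightInverse (n := p) a]
  calc nres p ≤ a.val := Nat.sInf_le hm
    _ < p := ZMod.val_lt a

lemma sq_of_lt {k : ℕ} (hk : 0 < k) (hkn : k < nres p) : IsSquare ((k : ZMod p)) := by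
  by_contra h
  have : nres p ≤ k :=
    Nat.sInf_le (show k ∈ {m : ℕ | 0 < m ∧ ¬ IsSquare ((m : ZMod p))} from ⟨hk, h⟩)
  omega

lemma two_le (h2 : p ≠ 2) : 2 ≤ nres p := by
  have h := mem_nres p h2
  have h1 : nres p ≠ 1 := by
    intro h1
    apply h.2; rw [h1]; push_cast; exact IsSquare.one
  omega

lemma key_bound (h2 : p ≠ 2) : nres p * nres p + 1 ≤ p + nres p := by
  set n := nres p with hn
  have hn2 : 2 ≤ n := two_le p h2
  have hnp : n < p := nres_lt p h2
  have hp1 : 1 < p := (Fact.out : p.Prime).one_lt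
  have hndvd : ¬ n ∣ p := by
    intro hd
    rcases (Nat.Prime.eq_one_or_self_of_dvd (Fact.out) n hd) with h | h <;> omega
  obtain ⟨m, hm⟩ : ∃ m, m = p / n + 1 := ⟨_, rfl⟩
  have hmod : p % n ≠ 0 := fun h => hndvd (Nat.dvd_of_mod_eq_zero h)
  have hmodlt : p % n < n := Nat.mod_lt _ (by omega)
  obtain ⟨A, hA⟩ : ∃ A, n * (p / n) = A := ⟨_, rfl⟩
  have hdm : A + p % n = p := by rw [← hA]; exact Nat.div_add_mod p n
  have hnm' : n * m = A + n := by rw [hm, ← hA]; ring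
  have h1 : p < n * m := by omega
  have h2' : n * m ≤ p + n - 1 := by omega
  obtain ⟨r, hr⟩ : ∃ r, r = n * m - p := ⟨_, rfl⟩
  have hr1 : 1 ≤ r := by omega
  have hrn : r < n := by omega
  have hrsq : IsSquare ((r : ZMod p)) := sq_of_lt p hr1 hrn
  have hcast : ((n * m : ℕ) : ZMod p) = (r : ZMod p) := by
    have hnm2 : (n * m : ℕ) = p + r := by omega
    rw [hnm2]; push_cast; simp
  have hr0 : (r : ZMod p) ≠ 0 := by
    rw [Ne, ZMod.natCast_eq_zero_iff]
    intro hd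
    have := Nat.le_of_dvd (by omega) hd
    omega
  have hnsq : ¬ IsSquare ((n : ZMod p)) := (mem_nres p h2).2
  have hmsq : ¬ IsSquare ((m : ZMod p)) := by
    intro hmsq
    apply hnsq
    have hm0 : (m : ZMod p) ≠ 0 := by
      intro h0
      apply hr0
      rw [← hcast]; push_cast; rw [h0, mul_zero]
    apply sq_cancel hmsq hm0
    rw [mul_comm]
    rw [show ((n : ZMod p) * m) = ((n * m : ℕ) : ZMod p) by push_cast; ring, hcast]
    exact hrsq
  have hnm : n ≤ m :=
    Nat.sInf_le (show m ∈ {k : ℕ | 0 < k ∧ ¬ IsSquare ((k : ZMod p))} from ⟨by rw [hm]; exact Nat.succ_pos _, hmsq⟩)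
  have hnn : n * n ≤ n * m := Nat.mul_le_mul_left n hnm
  omega

end NresAux

set_option maxHeartbeats 2000000 in
/-- For large primes `p ≡ 1 (mod 4)` and `T = 2p²` there is a proper symmetric
two-dimensional arithmetic progression in `[-T,T]` avoiding non-zero squares with at least
`c·p·n(p) ≥ c'·T^(1/2)·n(p)` elements. -/
theorem lower_bound_progression :
    ∃ c c' : ℝ, 0 < c ∧ 0 < c' ∧ ∃ p₀ : ℕ, ∀ p : ℕ, p.Prime → p % 4 = 1 → p₀ ≤ p →
      ∃ (q₁ q₂ : ℤ) (X₁ X₂ : ℝ), 0 < q₁ ∧ 0 < q₂ ∧ 0 < X₁ ∧ 0 < X₂ ∧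
        (∀ x₁ x₂ : ℤ, |(x₁ : ℝ)| ≤ X₁ → |(x₂ : ℝ)| ≤ X₂ →
          |((x₁ * q₁ + x₂ * q₂ : ℤ) : ℝ)| ≤ 2 * (p : ℝ) ^ 2) ∧
        (∀ x₁ x₂ : ℤ, |(x₁ : ℝ)| ≤ X₁ → |(x₂ : ℝ)| ≤ X₂ →
          ∀ n : ℤ, n ≠ 0 → x₁ * q₁ + x₂ * q₂ ≠ n ^ 2) ∧
        (∀ x₁ x₂ y₁ y₂ : ℤ, |(x₁ : ℝ)| ≤ X₁ → |(x₂ : ℝ)| ≤ X₂ → |(y₁ : ℝ)| ≤ X₁ →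
          |(y₂ : ℝ)| ≤ X₂ → x₁ * q₁ + x₂ * q₂ = y₁ * q₁ + y₂ * q₂ →
          x₁ = y₁ ∧ x₂ = y₂) ∧
        c * (p : ℝ) * (nres p : ℝ) ≤
          (({m : ℤ | ∃ x₁ x₂ : ℤ, |(x₁ : ℝ)| ≤ X₁ ∧ |(x₂ : ℝ)| ≤ X₂ ∧
            m = x₁ * q₁ + x₂ * q₂}.ncard : ℝ)) ∧
        c' * Real.sqrt (2 * (p : ℝ) ^ 2) * (nres p : ℝ) ≤
          (({m : ℤ | ∃ x₁ x₂ : ℤ, |(x₁ : ℝ)| ≤ X₁ ∧ |(x₂ : ℝ)| ≤ X₂ ∧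
            m = x₁ * q₁ + x₂ * q₂}.ncard : ℝ)) := by
  refine ⟨1, (Real.sqrt 2)⁻¹, one_pos, by positivity, 5, fun p hp hp4 hp5 => ?_⟩
  haveI : Fact p.Prime := ⟨hp⟩
  have h2 : p ≠ 2 := by omega
  set n := nres p with hn
  have hn2 : 2 ≤ n := NresAux.two_le p h2
  have hnp : n < p := NresAux.nres_lt p h2
  have hkey : n * n + 1 ≤ p + n := NresAux.key_bound p h2
  have hkeyZ : (n : ℤ) * (n : ℤ) + 1 ≤ (p : ℤ) + (n : ℤ) := by exact_mod_cast hkey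
  have hnpZ : (n : ℤ) < p := by exact_mod_cast hnp
  have hn2Z : (2 : ℤ) ≤ n := by exact_mod_cast hn2
  have hp5Z : (5 : ℤ) ≤ p := by exact_mod_cast hp5
  have habs1 : ∀ x : ℤ, |(x : ℝ)| ≤ (p : ℝ) - 1 ↔ |x| ≤ (p : ℤ) - 1 :=
    fun x => ⟨fun h => by exact_mod_cast h, fun h => by exact_mod_cast h⟩
  have habs2 : ∀ x : ℤ, |(x : ℝ)| ≤ (n : ℝ) - 1 ↔ |x| ≤ (n : ℤ) - 1 :=
    fun x => ⟨fun h => by exact_mod_cast h, fun h => by exact_mod_cast h⟩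
  -- ZMod facts
  have hcastZ : ∀ x₁ x₂ : ℤ, ((x₁ * (p : ℤ) + x₂ * ((p : ℤ) + (n : ℤ)) : ℤ) : ZMod p)
      = (x₂ : ZMod p) * (n : ZMod p) := by
    intro x₁ x₂
    push_cast [ZMod.natCast_self]
    ring
  have hnne : (n : ZMod p) ≠ 0 := by
    rw [Ne, ZMod.natCast_eq_zero_iff]
    intro hd
    have := Nat.le_of_dvd (by omega) hd
    omega
  have hnsq : ¬ IsSquare ((n : ZMod p)) := (NresAux.mem_nres p h2).2
  -- properness (over ℤ)
  have hinj : ∀ x₁ x₂ y₁ y₂ : ℤ, |x₂| ≤ (n : ℤ) - 1 → |y₂| ≤ (n : ℤ) - 1 →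
      x₁ * (p : ℤ) + x₂ * ((p : ℤ) + n) = y₁ * (p : ℤ) + y₂ * ((p : ℤ) + n) →
      x₁ = y₁ ∧ x₂ = y₂ := by
    intro x₁ x₂ y₁ y₂ hx2 hy2 heq
    have hz : (x₂ : ZMod p) * (n : ZMod p) = (y₂ : ZMod p) * (n : ZMod p) := by
      rw [← hcastZ x₁ x₂, ← hcastZ y₁ y₂, heq]
    have hxy : ((x₂ - y₂ : ℤ) : ZMod p) = 0 := by
      push_cast
      have := mul_right_cancel₀ hnne hz
      rw [this]; ring
    rw [ZMod.intCast_zmod_eq_zero_iff_dvd] at hxy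
    have h22 : x₂ = y₂ := by
      by_contra hne
      have hpos : 0 < |x₂ - y₂| := abs_pos.mpr (sub_ne_zero.mpr hne)
      have hle := Int.le_of_dvd hpos ((dvd_abs _ _).mpr hxy)
      have habs : |x₂ - y₂| ≤ |x₂| + |y₂| := abs_sub x₂ y₂
      nlinarith [mul_nonneg (sub_nonneg.mpr hn2Z : (0:ℤ) ≤ (n:ℤ) - 2) (by linarith : (0:ℤ) ≤ (n:ℤ) - 1)]
    refine ⟨?_, h22⟩
    have : x₁ * (p : ℤ) = y₁ * (p : ℤ) := by rw [h22] at heq; linarith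
    have hpne : (p : ℤ) ≠ 0 := by positivity
    exact mul_right_cancel₀ hpne this
  -- cardinality
  have hinjOn : Set.InjOn (fun q : ℤ × ℤ => q.1 * (p : ℤ) + q.2 * ((p : ℤ) + n))
      ↑(Finset.Icc (-((p : ℤ) - 1)) ((p : ℤ) - 1) ×ˢ Finset.Icc (-((n : ℤ) - 1)) ((n : ℤ) - 1)) := by
    intro a ha b hb hab
    simp only [Finset.coe_product, Set.mem_prod, Finset.mem_coe, Finset.mem_Icc] at ha hb
    have := hinj a.1 a.2 b.1 b.2 (abs_le.mpr ⟨ha.2.1, ha.2.2⟩) (abs_le.mpr ⟨hb.2.1, hb.2.2⟩) hab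
    exact Prod.ext this.1 this.2
  have hsub : {m : ℤ | ∃ x₁ x₂ : ℤ, |(x₁ : ℝ)| ≤ (p : ℝ) - 1 ∧ |(x₂ : ℝ)| ≤ (n : ℝ) - 1 ∧
      m = x₁ * (p : ℤ) + x₂ * ((p : ℤ) + n)} =
      ↑((Finset.Icc (-((p : ℤ) - 1)) ((p : ℤ) - 1) ×ˢ Finset.Icc (-((n : ℤ) - 1)) ((n : ℤ) - 1)).image
        (fun q : ℤ × ℤ => q.1 * (p : ℤ) + q.2 * ((p : ℤ) + n))) := by
    ext m
    simp only [Set.mem_setOf_eq, Finset.coe_image, Set.mem_image, Finset.mem_coe,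
      Finset.mem_product, Finset.mem_Icc]
    constructor
    · rintro ⟨x₁, x₂, h1, h2', rfl⟩
      rw [habs1] at h1; rw [habs2] at h2'
      rw [abs_le] at h1 h2'
      exact ⟨(x₁, x₂), ⟨⟨h1.1, h1.2⟩, ⟨h2'.1, h2'.2⟩⟩, rfl⟩
    · rintro ⟨⟨x₁, x₂⟩, ⟨⟨ha1, ha2⟩, ⟨hb1, hb2⟩⟩, rfl⟩
      exact ⟨x₁, x₂, (habs1 x₁).mpr (abs_le.mpr ⟨ha1, ha2⟩),
        (habs2 x₂).mpr (abs_le.mpr ⟨hb1, hb2⟩), rfl⟩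
  have e1 : ((p : ℤ) - 1 + 1 - -((p : ℤ) - 1)).toNat = 2 * p - 1 := by omega
  have e2 : ((n : ℤ) - 1 + 1 - -((n : ℤ) - 1)).toNat = 2 * n - 1 := by omega
  have hcard2 : p * n ≤ {m : ℤ | ∃ x₁ x₂ : ℤ, |(x₁ : ℝ)| ≤ (p : ℝ) - 1 ∧ |(x₂ : ℝ)| ≤ (n : ℝ) - 1 ∧
      m = x₁ * (p : ℤ) + x₂ * ((p : ℤ) + n)}.ncard := by
    rw [hsub, Set.ncard_coe_finset, Finset.card_image_of_injOn hinjOn, Finset.card_product,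
      Int.card_Icc, Int.card_Icc, e1, e2]
    exact Nat.mul_le_mul (by omega) (by omega)
  have hcardR : ((p : ℝ)) * n ≤ ({m : ℤ | ∃ x₁ x₂ : ℤ, |(x₁ : ℝ)| ≤ (p : ℝ) - 1 ∧
      |(x₂ : ℝ)| ≤ (n : ℝ) - 1 ∧ m = x₁ * (p : ℤ) + x₂ * ((p : ℤ) + n)}.ncard : ℝ) := by
    have := Nat.cast_le (α := ℝ) |>.mpr hcard2
    push_cast at this
    linarith
  refine ⟨(p : ℤ), (p : ℤ) + (n : ℤ), (p : ℝ) - 1, (n : ℝ) - 1,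
    by positivity, by positivity, by norm_num; exact_mod_cast (by omega : 1 < p),
    by norm_num; exact_mod_cast (by omega : 1 < n), ?_, ?_, ?_, ?_, ?_⟩
  · -- bound by 2p²
    intro x₁ x₂ h1 h2'
    rw [habs1] at h1; rw [habs2] at h2'
    have key : |x₁ * (p : ℤ) + x₂ * ((p : ℤ) + n)| ≤ 2 * (p : ℤ) ^ 2 := by
      have h3 := abs_add_le (x₁ * (p : ℤ)) (x₂ * ((p : ℤ) + n))
      rw [abs_mul, abs_mul] at h3
      have hq2 : |(p : ℤ) + n| = (p : ℤ) + n := abs_of_nonneg (by positivity)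
      have hq1 : |(p : ℤ)| = (p : ℤ) := abs_of_nonneg (by positivity)
      rw [hq1, hq2] at h3
      nlinarith [abs_nonneg x₁, abs_nonneg x₂]
    calc |((x₁ * (p : ℤ) + x₂ * ((p : ℤ) + n) : ℤ) : ℝ)|
        = ((|x₁ * (p : ℤ) + x₂ * ((p : ℤ) + n)| : ℤ) : ℝ) := by rw [Int.cast_abs]
      _ ≤ ((2 * (p : ℤ) ^ 2 : ℤ) : ℝ) := by exact_mod_cast key
      _ = 2 * (p : ℝ) ^ 2 := by push_cast; ring
  · -- no nonzero squares
    intro x₁ x₂ h1 h2' v hv heq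
    rw [habs1] at h1; rw [habs2] at h2'
    rcases eq_or_ne x₂ 0 with h0 | h0
    · subst h0
      rw [zero_mul, add_zero] at heq
      have hpdvd : (p : ℤ) ∣ v ^ 2 := ⟨x₁, by linarith [heq]⟩
      have hpv : (p : ℤ) ∣ v := (Nat.prime_iff_prime_int.mp hp).dvd_of_dvd_pow hpdvd
      obtain ⟨w, hw⟩ := hpv
      have hw0 : w ≠ 0 := by rintro rfl; simp at hw; exact hv hw
      have hw1 : 1 ≤ w ^ 2 := by nlinarith [sq_nonneg w, Int.one_le_abs hw0, sq_abs w]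
      have : (p : ℤ) ^ 2 ≤ v ^ 2 := by rw [hw]; nlinarith [sq_nonneg ((p:ℤ)*w)]
      have habs := abs_le.mp h1
      nlinarith
    · -- x₂ ≠ 0 : contradiction mod p
      have hsq : IsSquare ((x₂ : ZMod p) * (n : ZMod p)) := by
        rw [← hcastZ x₁ x₂, heq]
        exact ⟨(v : ZMod p), by push_cast; ring⟩
      have hk1 : 0 < x₂.natAbs := Int.natAbs_pos.mpr h0
      have hk2 : x₂.natAbs < n := by
        have h2'' : |x₂| ≤ (n : ℤ) - 1 := h2'
        rw [Int.abs_eq_natAbs] at h2''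
        omega
      have hksq : IsSquare ((x₂.natAbs : ZMod p)) := NresAux.sq_of_lt p hk1 hk2
      have hneg : IsSquare (-1 : ZMod p) := by
        rw [ZMod.exists_sq_eq_neg_one_iff]; omega
      have hxsq : IsSquare ((x₂ : ZMod p)) := by
        rcases Int.natAbs_eq x₂ with h | h
        · rw [h, Int.cast_natCast]; exact hksq
        · rw [h, Int.cast_neg, Int.cast_natCast]
          rw [show -((x₂.natAbs : ZMod p)) = (-1) * (x₂.natAbs : ZMod p) by ring]
          exact hneg.mul hksq
      have hx0 : (x₂ : ZMod p) ≠ 0 := by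
        rw [Ne, ZMod.intCast_zmod_eq_zero_iff_dvd]
        intro hd
        have := Int.le_of_dvd (abs_pos.mpr h0) ((dvd_abs _ _).mpr hd)
        omega
      exact hnsq (sq_cancel hxsq hx0 hsq)
  · -- properness
    intro x₁ x₂ y₁ y₂ h1 h2' h3 h4 heq
    rw [habs2] at h2' h4
    exact hinj x₁ x₂ y₁ y₂ h2' h4 heq
  · -- cardinality c = 1
    rw [one_mul]
    exact hcardR
  · have hs : Real.sqrt (2 * (p : ℝ) ^ 2) = Real.sqrt 2 * p := by
      rw [Real.sqrt_mul (by norm_num), Real.sqrt_sq (by positivity)]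
    rw [hs]
    have h2' : (Real.sqrt 2)⁻¹ * (Real.sqrt 2 * p) * n = (p : ℝ) * n := by
      rw [← mul_assoc, inv_mul_cancel₀ (ne_of_gt (Real.sqrt_pos.mpr two_pos)), one_mul]
    rw [h2']
    exact hcardR
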